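/- arXiv:2401.11712 — 2 statements merged into one kernel-verified Lean document; each statement's English description precedes it below -/
import Mathlib

section
/- There exists a constant C > 0 such that for every integer n ≥ 8 divisible by 4, the (1+1)-ENAS algorithm with multi-bit mutation and initial bound s = n/4 has expected runtime E[T] ≤ C·n on the UNIFORM problem. -/
/-!
Runtime analysis of the (1+1)-ENAS algorithm on the UNIFORM problem.

A neural architecture is a triple `x = (n_A, n_B, n_C) ∈ ℕ³`.  With `a = n/2`,
`b = c = n/4`, `A = (1/2)·sin(2π/n)`, `B = π/n − A`, the fitness is
`f(x) = (1/π)·((n/2 + i(x))·A + (n/4 + j(x))·B)` where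
`i(x) = min(n_B, b) + min(n_C, c)` and
`j(x) = min(n_A, a) + min(n_B, b) − max(0, min(n_B − b, c − n_C))` (in ℤ).

One-bit mutation chooses uniformly among nine actions (three increments with
probability 1/9 each, three guarded decrements with probability 1/9 each and
six guarded modifications with probability 1/18 each); we realize this as the
push-forward of the uniform distribution on `Fin 18`.

The (1+1)-ENAS Markov chain starts from a state whose coordinates are
independent uniform on `{0,…,s}` and repeatedly applies mutation followed by
elitist selection.  The expected runtime `E[T]`, where `T` is the first `t`
with `f(x_t) = 1`, is expressed as `∑_{t≥0} P(T > t)`, where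
`P(T > t) = ∑_x alive t x` and `alive t x` is the probability that the chain
is in state `x` at time `t` without having reached fitness `1` at any time
`u ≤ t`.
-/

namespace ENAS

open scoped ENNReal

/-- A neural architecture: the numbers of A-, B- and C-type blocks. -/
abbrev State := ℕ × ℕ × ℕ

/-- The number of B/C-type blocks contributing to the fitness. -/
def iVal (n : ℕ) (x : State) : ℕ := min x.2.1 (n / 4) + min x.2.2 (n / 4)

/-- The number of A/B-type blocks contributing to the fitness minus the number of
B-type blocks negatively affecting the fitness (evaluated in `ℤ`). -/
def jVal (n : ℕ) (x : State) : ℤ :=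
  min (x.1 : ℤ) ((n : ℤ) / 2) + min (x.2.1 : ℤ) ((n : ℤ) / 4) -
    max 0 (min ((x.2.1 : ℤ) - (n : ℤ) / 4) ((n : ℤ) / 4 - (x.2.2 : ℤ)))

/-- The fitness (classification accuracy) of an architecture on `UNIFORM`. -/
noncomputable def fitness (n : ℕ) (x : State) : ℝ :=
  (1 / Real.pi) *
    (((n : ℝ) / 2 + (iVal n x : ℝ)) * ((1 / 2) * Real.sin (2 * Real.pi / n)) +
      ((n : ℝ) / 4 + (jVal n x : ℝ)) *
        (Real.pi / n - (1 / 2) * Real.sin (2 * Real.pi / n)))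

/-- The elementary mutation actions.  Seeds `0`–`11` (two seeds per action) give the
six probability-`1/9` actions (add A/B/C, remove A/B/C, where removal of an absent
block leaves the state unchanged, as does truncated subtraction on `ℕ`); seeds
`12`–`17` give the six probability-`1/18` modification actions. -/
def applyAction (k : Fin 18) (x : State) : State :=
  match (k : ℕ), x with
  | 0, (na, nb, nc) => (na + 1, nb, nc)
  | 1, (na, nb, nc) => (na + 1, nb, nc)
  | 2, (na, nb, nc) => (na, nb + 1, nc)
  | 3, (na, nb, nc) => (na, nb + 1, nc)
  | 4, (na, nb, nc) => (na, nb, nc + 1)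
  | 5, (na, nb, nc) => (na, nb, nc + 1)
  | 6, (na, nb, nc) => (na - 1, nb, nc)
  | 7, (na, nb, nc) => (na - 1, nb, nc)
  | 8, (na, nb, nc) => (na, nb - 1, nc)
  | 9, (na, nb, nc) => (na, nb - 1, nc)
  | 10, (na, nb, nc) => (na, nb, nc - 1)
  | 11, (na, nb, nc) => (na, nb, nc - 1)
  | 12, (na, nb, nc) => if 0 < na then (na - 1, nb + 1, nc) else (na, nb, nc)
  | 13, (na, nb, nc) => if 0 < na then (na - 1, nb, nc + 1) else (na, nb, nc)
  | 14, (na, nb, nc) => if 0 < nb then (na + 1, nb - 1, nc) else (na, nb, nc)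
  | 15, (na, nb, nc) => if 0 < nb then (na, nb - 1, nc + 1) else (na, nb, nc)
  | 16, (na, nb, nc) => if 0 < nc then (na + 1, nb, nc - 1) else (na, nb, nc)
  | _, (na, nb, nc) => if 0 < nc then (na, nb + 1, nc - 1) else (na, nb, nc)

/-- The one-bit mutation operator, as a probability distribution on offspring. -/
noncomputable def mutate (x : State) : PMF State :=
  (PMF.uniformOfFintype (Fin 18)).map (fun k => applyAction k x)

/-- Elitist selection: keep the offspring `y` iff `f(y) ≥ f(x)`. -/
noncomputable def select (n : ℕ) (x y : State) : State :=
  if fitness n x ≤ fitness n y then y else x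

/-- One generation of the (1+1)-ENAS algorithm with one-bit mutation. -/
noncomputable def stepOneBit (n : ℕ) (x : State) : PMF State :=
  (mutate x).map (select n x)

/-- The initial distribution: the three coordinates are independent, each uniform on
`{0, 1, …, s}`. -/
noncomputable def initDist (s : ℕ) : PMF State :=
  (PMF.uniformOfFintype (Fin (s + 1) × Fin (s + 1) × Fin (s + 1))).map
    (fun q => ((q.1 : ℕ), (q.2.1 : ℕ), (q.2.2 : ℕ)))

/-- `alive n step μ0 t x` is the probability that the chain with initial distribution
`μ0` and transition kernel `step` is in state `x` at time `t` and has not reached a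
state of fitness `1` at any time `u ≤ t`; so `∑' x, alive n step μ0 t x = P(T > t)`
where `T` is the first hitting time of `{f = 1}`. -/
noncomputable def alive (n : ℕ) (step : State → PMF State) (μ0 : PMF State) :
    ℕ → State → ℝ≥0∞
  | 0, x => if fitness n x = 1 then 0 else μ0 x
  | t + 1, x => if fitness n x = 1 then 0 else ∑' y, alive n step μ0 t y * step y x

/-- The expected runtime `E[T] = ∑_{t ≥ 0} P(T > t)` of the algorithm, where `T` is
the first `t ≥ 0` with `f(x_t) = 1`. -/
noncomputable def expectedRuntime (n : ℕ) (step : State → PMF State) (μ0 : PMF State) :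
    ℝ≥0∞ :=
  ∑' t : ℕ, ∑' x : State, alive n step μ0 t x


/-- Applying the elementary (one-bit) mutation operation `k` consecutive times,
each application independently selecting its action. -/
noncomputable def mutateIter : ℕ → State → PMF State
  | 0, x => PMF.pure x
  | k + 1, x => (mutate x).bind (mutateIter k)

/-- Multi-bit mutation: apply the elementary mutation `K` consecutive times, where
`K − 1` is Poisson-distributed with mean `1`, independently of everything else. -/
noncomputable def mutateMulti (x : State) : PMF State :=
  (ProbabilityTheory.poissonPMF 1).bind fun k => mutateIter (k + 1) x

/-- One generation of the (1+1)-ENAS algorithm with multi-bit mutation. -/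
noncomputable def stepMultiBit (n : ℕ) (x : State) : PMF State :=
  (mutateMulti x).map (select n x)



section Auxiliary

open ProbabilityTheory
open scoped NNReal

def dI (q : ℕ) (x : State) : ℕ := (q - min x.2.1 q) + (q - min x.2.2 q)

def Wn (q : ℕ) (x : State) : ℕ :=
  (2 * q - min x.1 (2 * q)) + (q - min x.2.1 q) + min (x.2.1 - q) (q - x.2.2)

def Vn (q : ℕ) (x : State) : ℕ := 7 * dI q x + Wn q x

lemma iVal_add_dI (q : ℕ) (x : State) : iVal (4 * q) x + dI q x = 2 * q := by
  simp only [iVal, dI]; omega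

lemma jVal_add_Wn (q : ℕ) (x : State) : jVal (4 * q) x + (Wn q x : ℤ) = 3 * q := by
  obtain ⟨na, nb, nc⟩ := x
  simp only [jVal, Wn]
  push_cast
  omega

lemma Vn_le (q : ℕ) (x : State) : Vn q x ≤ 18 * q := by
  simp only [Vn, Wn, dI]; omega

set_option maxHeartbeats 1000000 in
lemma action_bound (q : ℕ) (s : Fin 18) (x : State) :
    dI q x ≤ dI q (applyAction s x) + 1 ∧ Wn q (applyAction s x) ≤ Wn q x + 2 := by
  obtain ⟨na, nb, nc⟩ := x
  fin_cases s <;>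
    [skip; skip; skip; skip; skip; skip; skip; skip; skip; skip; skip; skip;
     skip; skip; skip; skip; skip; skip] <;>
    simp only [applyAction, dI, Wn] <;> (try split_ifs) <;>
    (try dsimp only) <;> (constructor <;> omega)

noncomputable def Av (n : ℕ) : ℝ := (1 / 2) * Real.sin (2 * Real.pi / n)
noncomputable def Bv (n : ℕ) : ℝ := Real.pi / n - Av n

lemma key_sin {x : ℝ} (hx : 0 < x) (hx' : x ≤ 0.7875) : 7 / 8 * x ≤ Real.sin x := by
  have h2 : Real.sin x = 2 * Real.sin (x / 2) * Real.cos (x / 2) := by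
    rw [← Real.sin_two_mul]; ring_nf
  have h4 : Real.sin (x / 2) = 2 * Real.sin (x / 4) * Real.cos (x / 4) := by
    rw [← Real.sin_two_mul]; ring_nf
  have hs4 : x / 4 - (x / 4) ^ 3 / 4 < Real.sin (x / 4) :=
    by have := Real.sin_gt_sub_cube (x := x / 4) (by linarith); have : 0 < (x / 4) ^ 3 := by positivity
       linarith
  have hc4 : 1 - (x / 4) ^ 2 / 2 ≤ Real.cos (x / 4) := Real.one_sub_sq_div_two_le_cos
  have hc2 : 1 - (x / 2) ^ 2 / 2 ≤ Real.cos (x / 2) := Real.one_sub_sq_div_two_le_cos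
  have hu : x ^ 2 ≤ 0.62016 := by nlinarith
  have l1 : (0:ℝ) < x / 4 - (x / 4) ^ 3 / 4 := by nlinarith
  have l2 : (0:ℝ) < 1 - (x / 4) ^ 2 / 2 := by nlinarith
  have l3 : (0:ℝ) < 1 - (x / 2) ^ 2 / 2 := by nlinarith
  have hab : (x / 4 - (x / 4) ^ 3 / 4) * (1 - (x / 4) ^ 2 / 2) ≤
      Real.sin (x / 4) * Real.cos (x / 4) := by
    apply mul_le_mul hs4.le hc4 l2.le (le_trans (by positivity) hs4.le)
  have habc : (x / 4 - (x / 4) ^ 3 / 4) * (1 - (x / 4) ^ 2 / 2) * (1 - (x / 2) ^ 2 / 2) ≤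
      Real.sin (x / 4) * Real.cos (x / 4) * Real.cos (x / 2) := by
    apply mul_le_mul hab hc2 l3.le
    exact le_trans (by positivity) hab
  have hpoly : 7 / 8 * x ≤
      4 * ((x / 4 - (x / 4) ^ 3 / 4) * (1 - (x / 4) ^ 2 / 2) * (1 - (x / 2) ^ 2 / 2)) := by
    nlinarith [sq_nonneg x, sq_nonneg (x^2), pow_pos hx 3, pow_pos hx 5, hx.le]
  calc 7 / 8 * x ≤ 4 * ((x / 4 - (x / 4) ^ 3 / 4) * (1 - (x / 4) ^ 2 / 2) * (1 - (x / 2) ^ 2 / 2)) := hpoly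
    _ ≤ 4 * (Real.sin (x / 4) * Real.cos (x / 4) * Real.cos (x / 2)) := by linarith
    _ = Real.sin x := by rw [h2, h4]; ring

lemma x_mem {n : ℕ} (hn : 8 ≤ n) : 0 < 2 * Real.pi / n ∧ 2 * Real.pi / n ≤ 0.7875 := by
  have h8 : (8:ℝ) ≤ n := by exact_mod_cast hn
  have hpi := Real.pi_lt_d2
  have hpi0 := Real.pi_pos
  constructor
  · positivity
  · rw [div_le_iff₀ (by linarith)]
    nlinarith

lemma Av_pos {n : ℕ} (hn : 8 ≤ n) : 0 < Av n := by
  have h := x_mem hn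
  have : 2 * Real.pi / n < Real.pi := by
    have h8 : (8:ℝ) ≤ n := by exact_mod_cast hn
    rw [div_lt_iff₀ (by linarith)]
    nlinarith [Real.pi_pos]
  have := Real.sin_pos_of_pos_of_lt_pi h.1 this
  unfold Av; linarith

lemma Bv_pos {n : ℕ} (hn : 8 ≤ n) : 0 < Bv n := by
  have h := x_mem hn
  have hs := Real.sin_lt h.1
  unfold Bv Av
  have hn0 : (n:ℝ) ≠ 0 := by positivity
  have : Real.pi / n = (2 * Real.pi / n) / 2 := by field_simp
  rw [this]; linarith

lemma seven_Bv_le_Av {n : ℕ} (hn : 8 ≤ n) : 7 * Bv n ≤ Av n := by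
  have h := x_mem hn
  have hs := key_sin h.1 h.2
  unfold Bv Av
  have hn0 : (n:ℝ) ≠ 0 := by positivity
  have : Real.pi / n = (2 * Real.pi / n) / 2 := by field_simp
  rw [this]; linarith

lemma fitness_eq {q : ℕ} (hq : 2 ≤ q) (x : State) :
    fitness (4 * q) x =
      1 - ((dI q x : ℝ) * Av (4 * q) + (Wn q x : ℝ) * Bv (4 * q)) / Real.pi := by
  have hi : (iVal (4 * q) x : ℝ) = 2 * q - dI q x := by
    have h := iVal_add_dI q x
    have h' : ((iVal (4 * q) x : ℝ)) + (dI q x : ℝ) = 2 * q := by exact_mod_cast h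
    linarith
  have hj : (jVal (4 * q) x : ℝ) = 3 * q - Wn q x := by
    have h := jVal_add_Wn q x
    have h' : ((jVal (4 * q) x : ℝ)) + (Wn q x : ℝ) = 3 * q := by exact_mod_cast congrArg (fun z : ℤ => (z : ℝ)) h
    linarith
  simp only [fitness, Av, Bv]
  rw [hi, hj]
  have hπ := Real.pi_ne_zero
  have hq0 : ((4:ℝ) * q) ≠ 0 := by positivity
  push_cast
  field_simp
  ring

lemma fitness_le_iff {q : ℕ} (hq : 2 ≤ q) (x z : State) :
    fitness (4 * q) x ≤ fitness (4 * q) z ↔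
      (dI q z : ℝ) * Av (4 * q) + (Wn q z : ℝ) * Bv (4 * q) ≤
        (dI q x : ℝ) * Av (4 * q) + (Wn q x : ℝ) * Bv (4 * q) := by
  rw [fitness_eq hq, fitness_eq hq, sub_le_sub_iff_left]
  exact div_le_div_iff_of_pos_right Real.pi_pos

lemma fitness_eq_one_iff {q : ℕ} (hq : 2 ≤ q) (x : State) :
    fitness (4 * q) x = 1 ↔ Vn q x = 0 := by
  have hn : 8 ≤ 4 * q := by omega
  have hA := Av_pos hn
  have hB := Bv_pos hn
  rw [fitness_eq hq]
  rw [sub_eq_self, div_eq_zero_iff]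
  have hπ := Real.pi_ne_zero
  constructor
  · rintro (h | h)
    · have h1 : (0:ℝ) ≤ (dI q x : ℝ) * Av (4*q) := by positivity
      have h2 : (0:ℝ) ≤ (Wn q x : ℝ) * Bv (4*q) := by positivity
      have hd : (dI q x : ℝ) * Av (4*q) = 0 := by linarith
      have hw : (Wn q x : ℝ) * Bv (4*q) = 0 := by linarith
      have hd' : (dI q x : ℝ) = 0 := by
        rcases mul_eq_zero.1 hd with h' | h'
        · exact h'
        · exact absurd h' hA.ne'
      have hw' : (Wn q x : ℝ) = 0 := by
        rcases mul_eq_zero.1 hw with h' | h'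
        · exact h'
        · exact absurd h' hB.ne'
      have : dI q x = 0 := by exact_mod_cast hd'
      have : Wn q x = 0 := by exact_mod_cast hw'
      simp [Vn]; omega
    · exact absurd h hπ
  · intro h
    left
    have hd : dI q x = 0 := by simp [Vn] at h; omega
    have hw : Wn q x = 0 := by simp [Vn] at h; omega
    rw [hd, hw]; push_cast; ring

/-- If `z` is accepted (fitness no worse) and reachable within `m` mutations,
the potential `Vn` grows by at most `2m ∸ 7`. -/
lemma accepted_V {q : ℕ} (hq : 2 ≤ q) {x z : State} {m : ℕ}
    (hacc : fitness (4 * q) x ≤ fitness (4 * q) z)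
    (hd : dI q x ≤ dI q z + m) (hw : Wn q z ≤ Wn q x + 2 * m) :
    Vn q z ≤ Vn q x + (2 * m - 7) := by
  have hn : 8 ≤ 4 * q := by omega
  have hA := Av_pos hn
  have hB := Bv_pos hn
  have h7 := seven_Bv_le_Av hn
  rw [fitness_le_iff hq] at hacc
  by_cases hcase : dI q x ≤ dI q z
  · -- `7 * (dI z - dI x) ≤ Wn x - Wn z` over the reals, hence over `ℤ`
    have hr : 7 * ((dI q z : ℝ) - dI q x) ≤ (Wn q x : ℝ) - Wn q z := by
      have h1 : ((dI q z : ℝ) - dI q x) * Av (4 * q) ≤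
          ((Wn q x : ℝ) - Wn q z) * Bv (4 * q) := by nlinarith
      have h2 : ((dI q z : ℝ) - dI q x) * (7 * Bv (4 * q)) ≤
          ((dI q z : ℝ) - dI q x) * Av (4 * q) := by
        have : (0:ℝ) ≤ (dI q z : ℝ) - dI q x := by
          have : (dI q x : ℝ) ≤ dI q z := by exact_mod_cast hcase
          linarith
        nlinarith
      nlinarith
    have hz : 7 * ((dI q z : ℤ) - dI q x) ≤ (Wn q x : ℤ) - Wn q z := by exact_mod_cast hr
    simp only [Vn]; omega
  · simp only [Vn]; omega

/-- reachability bounds for iterated mutation -/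
lemma mutateIter_support (q : ℕ) :
    ∀ (m : ℕ) (x z : State), z ∈ (mutateIter m x).support →
      dI q x ≤ dI q z + m ∧ Wn q z ≤ Wn q x + 2 * m := by
  intro m
  induction m with
  | zero => intro x z hz; simp [mutateIter] at hz; subst hz; omega
  | succ m ih =>
    intro x z hz
    simp only [mutateIter, PMF.support_bind, Set.mem_iUnion, exists_prop] at hz
    obtain ⟨a, ha, hz⟩ := hz
    have ha2 : a ∈ (fun k : Fin 18 => applyAction k x) '' Set.univ := by
      simpa [mutate, PMF.support_map, PMF.support_uniformOfFintype] using ha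
    obtain ⟨s, -, rfl⟩ := ha2
    have h1 := action_bound q s x
    have h2 := ih (applyAction s x) z hz
    omega

lemma accept_of_le {q : ℕ} (hq : 2 ≤ q) {x y : State}
    (h1 : dI q y ≤ dI q x) (h2 : Wn q y ≤ Wn q x) :
    fitness (4 * q) x ≤ fitness (4 * q) y := by
  rw [fitness_le_iff hq]
  have hA := (Av_pos (by omega : 8 ≤ 4 * q)).le
  have hB := (Bv_pos (by omega : 8 ≤ 4 * q)).le
  have c1 : (dI q y : ℝ) ≤ dI q x := by exact_mod_cast h1
  have c2 : (Wn q y : ℝ) ≤ Wn q x := by exact_mod_cast h2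
  nlinarith

lemma good_pair {q : ℕ} (hq : 2 ≤ q) (x : State) (hx : Vn q x ≠ 0) :
    ∃ s1 s2 : Fin 18, s1 ≠ s2 ∧
      (fitness (4 * q) x ≤ fitness (4 * q) (applyAction s1 x) ∧
        Vn q (applyAction s1 x) + (if dI q x = 0 then 1 else 7) ≤ Vn q x) ∧
      (fitness (4 * q) x ≤ fitness (4 * q) (applyAction s2 x) ∧
        Vn q (applyAction s2 x) + (if dI q x = 0 then 1 else 7) ≤ Vn q x) := by
  obtain ⟨na, nb, nc⟩ := x
  by_cases hb : nb < q
  · refine ⟨2, 3, by decide, ?_⟩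
    have e2 : applyAction (2 : Fin 18) (na, nb, nc) = (na, nb + 1, nc) := rfl
    have e3 : applyAction (3 : Fin 18) (na, nb, nc) = (na, nb + 1, nc) := rfl
    rw [e2, e3]
    have h1 : dI q (na, nb + 1, nc) + 1 = dI q (na, nb, nc) := by
      simp only [dI]; omega
    have h2 : Wn q (na, nb + 1, nc) + 1 = Wn q (na, nb, nc) := by
      simp only [Wn]; omega
    have hne : dI q (na, nb, nc) ≠ 0 := by simp only [dI]; omega
    rw [if_neg hne]
    have hacc := accept_of_le hq (x := (na, nb, nc)) (y := (na, nb + 1, nc))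
      (by omega) (by omega)
    exact ⟨⟨hacc, by simp only [Vn]; omega⟩, ⟨hacc, by simp only [Vn]; omega⟩⟩
  · by_cases hc : nc < q
    · refine ⟨4, 5, by decide, ?_⟩
      have e4 : applyAction (4 : Fin 18) (na, nb, nc) = (na, nb, nc + 1) := rfl
      have e5 : applyAction (5 : Fin 18) (na, nb, nc) = (na, nb, nc + 1) := rfl
      rw [e4, e5]
      have h1 : dI q (na, nb, nc + 1) + 1 = dI q (na, nb, nc) := by
        simp only [dI]; omega
      have h2 : Wn q (na, nb, nc + 1) ≤ Wn q (na, nb, nc) := by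
        simp only [Wn]; omega
      have hne : dI q (na, nb, nc) ≠ 0 := by simp only [dI]; omega
      rw [if_neg hne]
      have hacc := accept_of_le hq (x := (na, nb, nc)) (y := (na, nb, nc + 1))
        (by omega) (by omega)
      exact ⟨⟨hacc, by simp only [Vn]; omega⟩, ⟨hacc, by simp only [Vn]; omega⟩⟩
    · refine ⟨0, 1, by decide, ?_⟩
      have e0 : applyAction (0 : Fin 18) (na, nb, nc) = (na + 1, nb, nc) := rfl
      have e1 : applyAction (1 : Fin 18) (na, nb, nc) = (na + 1, nb, nc) := rfl
      rw [e0, e1]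
      have hdx : dI q (na, nb, nc) = 0 := by simp only [dI]; omega
      have hna : na < 2 * q := by
        by_contra h
        apply hx
        simp only [Vn, dI, Wn] at *
        omega
      have h1 : dI q (na + 1, nb, nc) = dI q (na, nb, nc) := by
        simp only [dI]
      have h2 : Wn q (na + 1, nb, nc) + 1 = Wn q (na, nb, nc) := by
        simp only [Wn]; omega
      rw [if_pos hdx]
      have hacc := accept_of_le hq (x := (na, nb, nc)) (y := (na + 1, nb, nc))
        (by omega) (by omega)
      exact ⟨⟨hacc, by simp only [Vn]; omega⟩, ⟨hacc, by simp only [Vn]; omega⟩⟩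

-- PMF/tsum plumbing
lemma tsum_pure {α : Type*} (c : α) (g : α → ℝ≥0∞) :
    ∑' b, (PMF.pure c) b * g b = g c := by
  rw [tsum_eq_single c]
  · simp [PMF.pure_apply]
  · intro b hb; simp [PMF.pure_apply, hb]

lemma tsum_bind {α β : Type*} (p : PMF α) (f : α → PMF β) (g : β → ℝ≥0∞) :
    ∑' b, (p.bind f) b * g b = ∑' a, p a * ∑' b, f a b * g b := by
  simp only [PMF.bind_apply]
  calc ∑' b, (∑' a, p a * f a b) * g b
      = ∑' b, ∑' a, p a * f a b * g b := by
        refine tsum_congr fun b => ?_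
        exact ENNReal.tsum_mul_right.symm
    _ = ∑' a, ∑' b, p a * f a b * g b := ENNReal.tsum_comm
    _ = ∑' a, p a * ∑' b, f a b * g b := by
        refine tsum_congr fun a => ?_
        rw [← ENNReal.tsum_mul_left]
        refine tsum_congr fun b => ?_
        ring

lemma tsum_map {α β : Type*} (p : PMF α) (f : α → β) (g : β → ℝ≥0∞) :
    ∑' b, (p.map f) b * g b = ∑' a, p a * g (f a) := by
  rw [PMF.map, tsum_bind]
  refine tsum_congr fun a => ?_
  rw [Function.comp_apply, tsum_pure]

lemma tsum_mutate (x : State) (g : State → ℝ≥0∞) :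
    ∑' z, (mutate x) z * g z = (18 : ℝ≥0∞)⁻¹ * ∑ s : Fin 18, g (applyAction s x) := by
  rw [mutate, tsum_map, tsum_fintype]
  rw [Finset.mul_sum]
  refine Finset.sum_congr rfl fun s _ => ?_
  simp [PMF.uniformOfFintype_apply]

lemma poisson_apply (r : ℝ≥0) (n : ℕ) :
    poissonPMF r n = ENNReal.ofReal (poissonPMFReal r n) := rfl

lemma poisson_zero_ge : (1 : ℝ≥0∞) / 3 ≤ poissonPMF 1 0 := by
  rw [poisson_apply]
  have h0 : poissonPMFReal 1 0 = Real.exp (-1) := by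
    simp [poissonPMFReal]
  rw [h0]
  have h3 : (1 : ℝ) / 3 ≤ Real.exp (-1) := by
    rw [Real.exp_neg, div_le_iff₀ (by norm_num : (0:ℝ) < 3)]
    rw [inv_mul_eq_div, le_div_iff₀ (Real.exp_pos 1)]
    nlinarith [Real.exp_one_lt_d9]
  calc (1 : ℝ≥0∞) / 3 = ENNReal.ofReal (1/3) := by
        rw [ENNReal.ofReal_div_of_pos (by norm_num), ENNReal.ofReal_one,
          ENNReal.ofReal_ofNat]
    _ ≤ _ := ENNReal.ofReal_le_ofReal h3

lemma poisson_cube_sum :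
    ∑' k : ℕ, poissonPMF 1 k * ((k * (k - 1) * (k - 2) : ℕ) : ℝ≥0∞) ≤ 1 := by
  rw [ENNReal.tsum_eq_iSup_sum]
  apply iSup_le
  intro s
  set N := (s.sup id) + 1 with hN
  have hsub : s ⊆ Finset.range (3 + N) := by
    intro k hk
    simp only [Finset.mem_range]
    have := Finset.le_sup (f := id) hk
    simp only [id] at this
    omega
  refine (Finset.sum_le_sum_of_subset hsub).trans ?_
  have hterm : ∀ k : ℕ, poissonPMF 1 k * ((k * (k - 1) * (k - 2) : ℕ) : ℝ≥0∞) =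
      ENNReal.ofReal (Real.exp (-1) * ((k * (k - 1) * (k - 2) : ℕ) : ℝ) / k.factorial) := by
    intro k
    rw [poisson_apply, poissonPMFReal]
    rw [← ENNReal.ofReal_natCast (k * (k - 1) * (k - 2)), ← ENNReal.ofReal_mul (by positivity)]
    congr 1
    push_cast
    ring
  simp only [hterm]
  rw [← ENNReal.ofReal_sum_of_nonneg (fun k _ => by positivity)]
  have hreal : ∑ k ∈ Finset.range (3 + N),
      Real.exp (-1) * ((k * (k - 1) * (k - 2) : ℕ) : ℝ) / k.factorial ≤ 1 := by
    rw [Finset.sum_range_add]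
    have h03 : ∑ k ∈ Finset.range 3,
        Real.exp (-1) * ((k * (k - 1) * (k - 2) : ℕ) : ℝ) / k.factorial = 0 := by
      simp [Finset.sum_range_succ]
    rw [h03, zero_add]
    have hshift : ∀ j : ℕ,
        Real.exp (-1) * (((3 + j) * (3 + j - 1) * (3 + j - 2) : ℕ) : ℝ) / (3 + j).factorial
          = Real.exp (-1) * (1 ^ j / (j.factorial : ℝ)) := by
      intro j
      have hf : ((3 + j).factorial : ℝ) = (3 + j) * ((2 + j) * ((1 + j) * (j.factorial : ℝ))) := by
        have : 3 + j = (2 + j) + 1 := by omega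
        rw [this]
        have : 2 + j = (1 + j) + 1 := by omega
        rw [this]
        have : 1 + j = j + 1 := by omega
        rw [this]
        simp [Nat.factorial_succ]
        push_cast
        ring
      have hnum : (((3 + j) * (3 + j - 1) * (3 + j - 2) : ℕ) : ℝ) = (3 + j) * ((2 + j) * (1 + j)) := by
        push_cast [show 3 + j - 1 = 2 + j by omega, show 3 + j - 2 = 1 + j by omega]
        ring
      rw [hnum, hf, one_pow]
      have hj : (j.factorial : ℝ) > 0 := by positivity
      have h3j : ((3 + j : ℕ) : ℝ) > 0 := by positivity
      field_simp
    simp only [hshift]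
    rw [← Finset.mul_sum]
    calc Real.exp (-1) * ∑ j ∈ Finset.range N, (1:ℝ) ^ j / (j.factorial : ℝ)
        ≤ Real.exp (-1) * Real.exp 1 :=
          mul_le_mul_of_nonneg_left (Real.sum_le_exp_of_nonneg zero_le_one N)
            (Real.exp_pos _).le
      _ = 1 := by rw [← Real.exp_add]; norm_num
  calc ENNReal.ofReal _ ≤ ENNReal.ofReal 1 := ENNReal.ofReal_le_ofReal hreal
    _ = 1 := ENNReal.ofReal_one

lemma nat_cube_bound (k : ℕ) : 6 * (2 * (k + 1) - 7) ≤ k * (k - 1) * (k - 2) := by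
  rcases k with _ | _ | _ | _ | _ | m
  · omega
  · omega
  · omega
  · omega
  · omega
  · have h1 : m + 5 - 1 = m + 4 := by omega
    have h2 : m + 5 - 2 = m + 3 := by omega
    rw [h1, h2]
    have e1 : 6 * (2 * (m + 5 + 1) - 7) = 12 * m + 30 := by omega
    rw [e1]
    calc 12 * m + 30 ≤ (m + 5) * 12 := by omega
      _ ≤ (m + 5) * ((m + 4) * (m + 3)) := by
          refine Nat.mul_le_mul_left _ ?_
          have : 12 ≤ (m + 4) * (m + 3) := by nlinarith
          exact this
      _ = (m + 5) * (m + 4) * (m + 3) := by ring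

lemma poisson_tail_bound :
    ∑' k : ℕ, poissonPMF 1 k * ((2 * (k + 1) - 7 : ℕ) : ℝ≥0∞) ≤ 1 / 6 := by
  rw [ENNReal.le_div_iff_mul_le (Or.inl (by norm_num)) (Or.inl (by norm_num))]
  calc (∑' k : ℕ, poissonPMF 1 k * ((2 * (k + 1) - 7 : ℕ) : ℝ≥0∞)) * 6
      = ∑' k : ℕ, poissonPMF 1 k * ((6 * (2 * (k + 1) - 7) : ℕ) : ℝ≥0∞) := by
        rw [← ENNReal.tsum_mul_right]
        refine tsum_congr fun k => ?_
        push_cast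
        ring
    _ ≤ ∑' k : ℕ, poissonPMF 1 k * ((k * (k - 1) * (k - 2) : ℕ) : ℝ≥0∞) := by
        refine ENNReal.tsum_le_tsum fun k => ?_
        refine mul_le_mul_right ?_ _
        exact_mod_cast nat_cube_bound k
    _ ≤ 1 := poisson_cube_sum

lemma c16 : (1:ℝ≥0∞)/6 = ENNReal.ofReal (1/6) := by
  rw [ENNReal.ofReal_div_of_pos (by norm_num : (0:ℝ) < 6), ENNReal.ofReal_one, ENNReal.ofReal_ofNat]
lemma c127 : (1:ℝ≥0∞)/27 = ENNReal.ofReal (1/27) := by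
  rw [ENNReal.ofReal_div_of_pos (by norm_num : (0:ℝ) < 27), ENNReal.ofReal_one, ENNReal.ofReal_ofNat]
lemma c13 : (1:ℝ≥0∞)/3 = ENNReal.ofReal (1/3) := by
  rw [ENNReal.ofReal_div_of_pos (by norm_num : (0:ℝ) < 3), ENNReal.ofReal_one, ENNReal.ofReal_ofNat]
lemma c1418 : (14:ℝ≥0∞)/18 = ENNReal.ofReal (14/18) := by
  rw [ENNReal.ofReal_div_of_pos (by norm_num : (0:ℝ) < 18), ENNReal.ofReal_ofNat, ENNReal.ofReal_ofNat]
lemma c218 : (2:ℝ≥0∞)/18 = ENNReal.ofReal (2/18) := by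
  rw [ENNReal.ofReal_div_of_pos (by norm_num : (0:ℝ) < 18), ENNReal.ofReal_ofNat, ENNReal.ofReal_ofNat]

lemma F1 : (1:ℝ≥0∞)/6 + 1/27 ≤ 1/3 * (18⁻¹ * (2 * 7)) := by
  have h : (18:ℝ≥0∞)⁻¹ * (2 * 7) = 14/18 := by
    rw [show ((2:ℝ≥0∞) * 7) = 14 by norm_num, div_eq_mul_inv, mul_comm]
  rw [h, c16, c127, c13, c1418, ← ENNReal.ofReal_add (by norm_num) (by norm_num),
    ← ENNReal.ofReal_mul (by norm_num)]
  exact ENNReal.ofReal_le_ofReal (by norm_num)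

lemma F2 : (1:ℝ≥0∞)/27 ≤ 1/3 * (18⁻¹ * (2 * 1)) := by
  have h : (18:ℝ≥0∞)⁻¹ * (2 * 1) = 2/18 := by
    rw [mul_one, div_eq_mul_inv, mul_comm]
  rw [h, c127, c13, c218, ← ENNReal.ofReal_mul (by norm_num)]
  exact ENNReal.ofReal_le_ofReal (by norm_num)

lemma accepted_V_le {q : ℕ} (hq : 2 ≤ q) {x z : State}
    (hacc : fitness (4 * q) x ≤ fitness (4 * q) z)
    (hcase : dI q x ≤ dI q z) : Vn q z ≤ Vn q x := by
  have hn : 8 ≤ 4 * q := by omega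
  have hA := Av_pos hn
  have hB := Bv_pos hn
  have h7 := seven_Bv_le_Av hn
  rw [fitness_le_iff hq] at hacc
  have hr : 7 * ((dI q z : ℝ) - dI q x) ≤ (Wn q x : ℝ) - Wn q z := by
    have h1 : ((dI q z : ℝ) - dI q x) * Av (4 * q) ≤
        ((Wn q x : ℝ) - Wn q z) * Bv (4 * q) := by nlinarith
    have hpos : (0:ℝ) ≤ (dI q z : ℝ) - dI q x := by
      have : (dI q x : ℝ) ≤ dI q z := by exact_mod_cast hcase
      linarith
    nlinarith
  have hz7 : 7 * ((dI q z : ℤ) - dI q x) ≤ (Wn q x : ℤ) - Wn q z := by exact_mod_cast hr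
  simp only [Vn]; omega

lemma sel_bound {q : ℕ} (hq : 2 ≤ q) (x : State) (m : ℕ) (z : State)
    (hz : z ∈ (mutateIter m x).support) :
    Vn q (select (4 * q) x z) ≤ Vn q x + (2 * m - 7) := by
  rw [select]
  split_ifs with h
  · obtain ⟨hd, hw⟩ := mutateIter_support q m x z hz
    exact accepted_V hq h hd hw
  · omega

lemma sel_bound0 {q : ℕ} (hq : 2 ≤ q) (x : State) (hd0 : dI q x = 0) (z : State) :
    Vn q (select (4 * q) x z) ≤ Vn q x := by
  rw [select]
  split_ifs with h
  · exact accepted_V_le hq h (by omega)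
  · exact le_refl _

lemma Ek_le {q : ℕ} (hq : 2 ≤ q) (x : State) (m : ℕ) :
    ∑' z, (mutateIter m x) z * (Vn q (select (4 * q) x z) : ℝ≥0∞)
      ≤ (Vn q x : ℝ≥0∞) + ((2 * m - 7 : ℕ) : ℝ≥0∞) := by
  calc ∑' z, (mutateIter m x) z * (Vn q (select (4 * q) x z) : ℝ≥0∞)
      ≤ ∑' z, (mutateIter m x) z * ((Vn q x + (2 * m - 7) : ℕ) : ℝ≥0∞) := by
        refine ENNReal.tsum_le_tsum fun z => ?_
        by_cases hz : z ∈ (mutateIter m x).support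
        · exact mul_le_mul_right (by exact_mod_cast sel_bound hq x m z hz) _
        · have h0 : (mutateIter m x) z = 0 := by
            rwa [PMF.mem_support_iff, not_not] at hz
          simp [h0]
    _ = ((Vn q x + (2 * m - 7) : ℕ) : ℝ≥0∞) := by
        rw [ENNReal.tsum_mul_right, PMF.tsum_coe, one_mul]
    _ = _ := by push_cast; ring

lemma Ek_le0 {q : ℕ} (hq : 2 ≤ q) (x : State) (hd0 : dI q x = 0) (m : ℕ) :
    ∑' z, (mutateIter m x) z * (Vn q (select (4 * q) x z) : ℝ≥0∞)
      ≤ (Vn q x : ℝ≥0∞) := by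
  calc ∑' z, (mutateIter m x) z * (Vn q (select (4 * q) x z) : ℝ≥0∞)
      ≤ ∑' z, (mutateIter m x) z * (Vn q x : ℝ≥0∞) := by
        refine ENNReal.tsum_le_tsum fun z => ?_
        exact mul_le_mul_right (by exact_mod_cast sel_bound0 hq x hd0 z) _
    _ = (Vn q x : ℝ≥0∞) := by
        rw [ENNReal.tsum_mul_right, PMF.tsum_coe, one_mul]

lemma E0_le {q : ℕ} (hq : 2 ≤ q) (x : State) (hx : Vn q x ≠ 0) (g : ℕ)
    (hg : g = if dI q x = 0 then 1 else 7) :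
    (∑' z, (mutateIter 1 x) z * (Vn q (select (4 * q) x z) : ℝ≥0∞))
      + 18⁻¹ * (2 * (g : ℝ≥0∞)) ≤ (Vn q x : ℝ≥0∞) := by
  have h1 : mutateIter 1 x = mutate x := by
    show (mutate x).bind (mutateIter 0) = mutate x
    have h0 : (mutateIter 0 : State → PMF State) = PMF.pure := rfl
    rw [h0, PMF.bind_pure]
  rw [h1, tsum_mutate]
  obtain ⟨s1, s2, hne, ⟨hacc1, hV1⟩, ⟨hacc2, hV2⟩⟩ := good_pair hq x hx
  rw [← hg] at hV1 hV2
  have hgen : ∀ s : Fin 18, Vn q (select (4 * q) x (applyAction s x)) ≤ Vn q x := by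
    intro s
    have hsup : applyAction s x ∈ (mutateIter 1 x).support := by
      rw [h1, mutate, PMF.support_map]
      exact ⟨s, by simp, rfl⟩
    have := sel_bound hq x 1 _ hsup
    omega
  have hpt : ∀ s : Fin 18,
      (Vn q (select (4 * q) x (applyAction s x)) : ℝ≥0∞)
        + ((if s = s1 then (g : ℝ≥0∞) else 0) + (if s = s2 then (g : ℝ≥0∞) else 0))
        ≤ (Vn q x : ℝ≥0∞) := by
    intro s
    by_cases e1 : s = s1
    · subst e1
      rw [if_pos rfl, if_neg hne, add_zero, select, if_pos hacc1]
      exact_mod_cast hV1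
    · by_cases e2 : s = s2
      · subst e2
        rw [if_neg e1, if_pos rfl, zero_add, select, if_pos hacc2]
        exact_mod_cast hV2
      · rw [if_neg e1, if_neg e2, add_zero, add_zero]
        exact_mod_cast hgen s
  have hsum : (∑ s : Fin 18, (Vn q (select (4 * q) x (applyAction s x)) : ℝ≥0∞))
      + 2 * (g : ℝ≥0∞) ≤ 18 * (Vn q x : ℝ≥0∞) := by
    have hs := Finset.sum_le_sum (fun s (_ : s ∈ Finset.univ) => hpt s)
    rw [Finset.sum_add_distrib, Finset.sum_add_distrib] at hs
    rw [Finset.sum_ite_eq' Finset.univ s1 (fun _ => (g : ℝ≥0∞)),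
      Finset.sum_ite_eq' Finset.univ s2 (fun _ => (g : ℝ≥0∞))] at hs
    simp only [Finset.mem_univ, if_true] at hs
    calc (∑ s : Fin 18, (Vn q (select (4 * q) x (applyAction s x)) : ℝ≥0∞))
        + 2 * (g : ℝ≥0∞)
        = (∑ s : Fin 18, (Vn q (select (4 * q) x (applyAction s x)) : ℝ≥0∞))
          + ((g : ℝ≥0∞) + (g : ℝ≥0∞)) := by ring
      _ ≤ ∑ _s : Fin 18, (Vn q x : ℝ≥0∞) := hs
      _ = 18 * (Vn q x : ℝ≥0∞) := by
          rw [Finset.sum_const, Finset.card_univ, Fintype.card_fin, nsmul_eq_mul]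
          norm_num
  calc (18 : ℝ≥0∞)⁻¹ * (∑ s : Fin 18, (Vn q (select (4 * q) x (applyAction s x)) : ℝ≥0∞))
      + 18⁻¹ * (2 * (g : ℝ≥0∞))
      = 18⁻¹ * ((∑ s : Fin 18, (Vn q (select (4 * q) x (applyAction s x)) : ℝ≥0∞))
          + 2 * (g : ℝ≥0∞)) := by rw [mul_add]
    _ ≤ 18⁻¹ * (18 * (Vn q x : ℝ≥0∞)) := mul_le_mul_right hsum _
    _ = (Vn q x : ℝ≥0∞) := by
        rw [← mul_assoc, ENNReal.inv_mul_cancel (by norm_num) (by norm_num), one_mul]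

lemma drift {q : ℕ} (hq : 2 ≤ q) (x : State) (hx : Vn q x ≠ 0) :
    (∑' z, (stepMultiBit (4 * q) x) z * (Vn q z : ℝ≥0∞)) + 1 / 27
      ≤ (Vn q x : ℝ≥0∞) := by
  have hstep : ∑' z, (stepMultiBit (4 * q) x) z * (Vn q z : ℝ≥0∞)
      = ∑' k : ℕ, poissonPMF 1 k *
          ∑' z, (mutateIter (k + 1) x) z * (Vn q (select (4 * q) x z) : ℝ≥0∞) := by
    rw [stepMultiBit, tsum_map, mutateMulti, tsum_bind]
  set Vx := (Vn q x : ℝ≥0∞) with hVx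
  set P : ℕ → ℝ≥0∞ := fun k => poissonPMF 1 k with hP
  set E : ℕ → ℝ≥0∞ := fun k =>
    ∑' z, (mutateIter (k + 1) x) z * (Vn q (select (4 * q) x z) : ℝ≥0∞) with hE
  set S := ∑' k : ℕ, P (k + 1) with hS
  have hsplit : ∑' k, P k * E k = P 0 * E 0 + ∑' k, P (k + 1) * E (k + 1) :=
    tsum_eq_zero_add' ENNReal.summable
  have hPsum : P 0 + S = 1 := by
    rw [hS, ← tsum_eq_zero_add' ENNReal.summable]
    exact PMF.tsum_coe _
  have hP0 : 1 / 3 ≤ P 0 := poisson_zero_ge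
  rw [hstep]
  show (∑' k, P k * E k) + 1 / 27 ≤ Vx
  rw [hsplit]
  by_cases hd0 : dI q x = 0
  · -- phase 2
    have hE0 : E 0 + 18⁻¹ * (2 * ((1 : ℕ) : ℝ≥0∞)) ≤ Vx := E0_le hq x hx 1 (by rw [if_pos hd0])
    have hEk : ∀ k, E (k + 1) ≤ Vx := fun k => Ek_le0 hq x hd0 (k + 2)
    calc P 0 * E 0 + (∑' k, P (k + 1) * E (k + 1)) + 1 / 27
        ≤ P 0 * E 0 + (∑' k, P (k + 1) * Vx) + P 0 * (18⁻¹ * (2 * 1)) := by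
          refine add_le_add (add_le_add_right ?_ _) ?_
          · exact ENNReal.tsum_le_tsum fun k => mul_le_mul_right (hEk k) _
          · exact F2.trans (mul_le_mul_left hP0 _)
      _ = P 0 * (E 0 + 18⁻¹ * (2 * 1)) + S * Vx := by
          rw [ENNReal.tsum_mul_right, ← hS, mul_add]; ring
      _ ≤ P 0 * Vx + S * Vx := by
          refine add_le_add_left (mul_le_mul_right ?_ _) _
          simpa using hE0
      _ = Vx := by rw [← add_mul, hPsum, one_mul]
  · -- phase 1
    have hE0 : E 0 + 18⁻¹ * (2 * ((7 : ℕ) : ℝ≥0∞)) ≤ Vx := E0_le hq x hx 7 (by rw [if_neg hd0])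
    have hEk : ∀ k, E (k + 1) ≤ Vx + ((2 * (k + 2) - 7 : ℕ) : ℝ≥0∞) := fun k =>
      Ek_le hq x (k + 2)
    have hT : (∑' k : ℕ, P (k + 1) * ((2 * (k + 2) - 7 : ℕ) : ℝ≥0∞)) ≤ 1 / 6 := by
      have hz : (∑' k : ℕ, P k * ((2 * (k + 1) - 7 : ℕ) : ℝ≥0∞))
          = P 0 * ((2 * (0 + 1) - 7 : ℕ) : ℝ≥0∞)
            + ∑' k : ℕ, P (k + 1) * ((2 * (k + 1 + 1) - 7 : ℕ) : ℝ≥0∞) :=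
        tsum_eq_zero_add' ENNReal.summable
      have h0 : ((2 * (0 + 1) - 7 : ℕ) : ℝ≥0∞) = 0 := by norm_num
      rw [h0, mul_zero, zero_add] at hz
      have := poisson_tail_bound
      calc (∑' k : ℕ, P (k + 1) * ((2 * (k + 2) - 7 : ℕ) : ℝ≥0∞))
          = ∑' k : ℕ, P k * ((2 * (k + 1) - 7 : ℕ) : ℝ≥0∞) := by rw [hz]
        _ ≤ 1 / 6 := this
    calc P 0 * E 0 + (∑' k, P (k + 1) * E (k + 1)) + 1 / 27
        ≤ P 0 * E 0 + (∑' k, P (k + 1) * (Vx + ((2 * (k + 2) - 7 : ℕ) : ℝ≥0∞))) + 1 / 27 := by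
          refine add_le_add (add_le_add_right ?_ _) le_rfl
          exact ENNReal.tsum_le_tsum fun k => mul_le_mul_right (hEk k) _
      _ = P 0 * E 0 + (S * Vx + ∑' k, P (k + 1) * ((2 * (k + 2) - 7 : ℕ) : ℝ≥0∞)) + 1 / 27 := by
          have hma : ∀ k : ℕ, P (k + 1) * (Vx + ((2 * (k + 2) - 7 : ℕ) : ℝ≥0∞))
              = P (k + 1) * Vx + P (k + 1) * ((2 * (k + 2) - 7 : ℕ) : ℝ≥0∞) :=
            fun k => mul_add _ _ _
          rw [tsum_congr hma, ENNReal.tsum_add, ENNReal.tsum_mul_right, hS]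
      _ ≤ P 0 * E 0 + (S * Vx + 1 / 6) + 1 / 27 := by
          exact add_le_add (add_le_add_right (add_le_add_right hT _) _) le_rfl
      _ = P 0 * E 0 + S * Vx + (1 / 6 + 1 / 27) := by ring
      _ ≤ P 0 * E 0 + S * Vx + P 0 * (18⁻¹ * (2 * 7)) := by
          exact add_le_add_right (F1.trans (mul_le_mul_left hP0 _)) _
      _ = P 0 * (E 0 + 18⁻¹ * (2 * 7)) + S * Vx := by rw [mul_add]; ring
      _ ≤ P 0 * Vx + S * Vx := by
          refine add_le_add_left (mul_le_mul_right ?_ _) _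
          simpa using hE0
      _ = Vx := by rw [← add_mul, hPsum, one_mul]

noncomputable def PTf (q : ℕ) (μ0 : PMF State) (t : ℕ) : ℝ≥0∞ :=
  ∑' x : State, alive (4 * q) (stepMultiBit (4 * q)) μ0 t x

noncomputable def WTf (q : ℕ) (μ0 : PMF State) (t : ℕ) : ℝ≥0∞ :=
  ∑' x : State, alive (4 * q) (stepMultiBit (4 * q)) μ0 t x * (Vn q x : ℝ≥0∞)

lemma alive_of_fitness_eq_one {n : ℕ} {step : State → PMF State} {μ0 : PMF State}
    {t : ℕ} {x : State} (h : fitness n x = 1) : alive n step μ0 t x = 0 := by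
  cases t <;> simp [alive, h]

lemma PTf_le_WTf {q : ℕ} (hq : 2 ≤ q) (μ0 : PMF State) (t : ℕ) :
    PTf q μ0 t ≤ WTf q μ0 t := by
  refine ENNReal.tsum_le_tsum fun x => ?_
  by_cases ha : alive (4 * q) (stepMultiBit (4 * q)) μ0 t x = 0
  · simp [ha]
  · have hf : fitness (4 * q) x ≠ 1 := fun h => ha (alive_of_fitness_eq_one h)
    have hV : Vn q x ≠ 0 := fun h0 => hf ((fitness_eq_one_iff hq x).2 h0)
    have h1 : (1 : ℝ≥0∞) ≤ (Vn q x : ℝ≥0∞) := by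
      exact_mod_cast Nat.one_le_iff_ne_zero.2 hV
    exact le_mul_of_one_le_right zero_le h1

lemma WTf_step {q : ℕ} (hq : 2 ≤ q) (μ0 : PMF State) (t : ℕ) :
    WTf q μ0 (t + 1) + (1 / 27) * PTf q μ0 (t + 1) ≤ WTf q μ0 t := by
  set al := alive (4 * q) (stepMultiBit (4 * q)) μ0 with hal
  calc WTf q μ0 (t + 1) + (1 / 27) * PTf q μ0 (t + 1)
      = ∑' x : State, al (t + 1) x * ((Vn q x : ℝ≥0∞) + 1 / 27) := by
        rw [WTf, PTf, ← ENNReal.tsum_mul_left, ← ENNReal.tsum_add]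
        refine tsum_congr fun x => ?_
        rw [mul_add, mul_comm (1 / 27 : ℝ≥0∞) (al (t + 1) x)]
    _ ≤ ∑' x : State, (∑' y : State, al t y * (stepMultiBit (4 * q) y) x) *
          ((Vn q x : ℝ≥0∞) + 1 / 27) := by
        refine ENNReal.tsum_le_tsum fun x => ?_
        refine mul_le_mul_left ?_ _
        have : al (t + 1) x = if fitness (4 * q) x = 1 then 0
            else ∑' y : State, al t y * (stepMultiBit (4 * q) y) x := rfl
        rw [this]
        split_ifs
        · exact zero_le
        · exact le_rfl
    _ = ∑' y : State, al t y *
          ∑' x : State, (stepMultiBit (4 * q) y) x * ((Vn q x : ℝ≥0∞) + 1 / 27) := by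
        calc ∑' x : State, (∑' y : State, al t y * (stepMultiBit (4 * q) y) x) *
              ((Vn q x : ℝ≥0∞) + 1 / 27)
            = ∑' x : State, ∑' y : State, al t y * (stepMultiBit (4 * q) y) x *
                ((Vn q x : ℝ≥0∞) + 1 / 27) := by
              refine tsum_congr fun x => ?_
              exact ENNReal.tsum_mul_right.symm
          _ = ∑' y : State, ∑' x : State, al t y * (stepMultiBit (4 * q) y) x *
                ((Vn q x : ℝ≥0∞) + 1 / 27) := ENNReal.tsum_comm
          _ = _ := by
              refine tsum_congr fun y => ?_
              rw [← ENNReal.tsum_mul_left]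
              refine tsum_congr fun x => ?_
              ring
    _ ≤ ∑' y : State, al t y * (Vn q y : ℝ≥0∞) := by
        refine ENNReal.tsum_le_tsum fun y => ?_
        by_cases hy : al t y = 0
        · simp [hy]
        · refine mul_le_mul_right ?_ _
          have hf : fitness (4 * q) y ≠ 1 := fun h => hy (alive_of_fitness_eq_one h)
          have hV : Vn q y ≠ 0 := fun h0 => hf ((fitness_eq_one_iff hq y).2 h0)
          calc ∑' x : State, (stepMultiBit (4 * q) y) x * ((Vn q x : ℝ≥0∞) + 1 / 27)
              = (∑' x : State, (stepMultiBit (4 * q) y) x * (Vn q x : ℝ≥0∞))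
                + (∑' x : State, (stepMultiBit (4 * q) y) x) * (1 / 27) := by
                rw [← ENNReal.tsum_mul_right, ← ENNReal.tsum_add]
                refine tsum_congr fun x => ?_
                rw [mul_add]
            _ = (∑' x : State, (stepMultiBit (4 * q) y) x * (Vn q x : ℝ≥0∞)) + 1 / 27 := by
                rw [PMF.tsum_coe, one_mul]
            _ ≤ (Vn q y : ℝ≥0∞) := drift hq y hV
    _ = WTf q μ0 t := rfl

lemma WTf_zero_le {q : ℕ} (μ0 : PMF State) : WTf q μ0 0 ≤ (18 * q : ℕ) := by
  calc WTf q μ0 0 ≤ ∑' x : State, μ0 x * ((18 * q : ℕ) : ℝ≥0∞) := by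
        refine ENNReal.tsum_le_tsum fun x => ?_
        refine mul_le_mul' ?_ ?_
        · show alive (4 * q) (stepMultiBit (4 * q)) μ0 0 x ≤ μ0 x
          have : alive (4 * q) (stepMultiBit (4 * q)) μ0 0 x
              = if fitness (4 * q) x = 1 then 0 else μ0 x := rfl
          rw [this]; split_ifs
          · exact zero_le
          · exact le_rfl
        · exact_mod_cast Vn_le q x
    _ = ((18 * q : ℕ) : ℝ≥0∞) := by rw [ENNReal.tsum_mul_right, PMF.tsum_coe, one_mul]

lemma main_induction {q : ℕ} (hq : 2 ≤ q) (μ0 : PMF State) :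
    ∀ N : ℕ, WTf q μ0 N + (1 / 27) * ∑ t ∈ Finset.range (N + 1), PTf q μ0 t
      ≤ WTf q μ0 0 + (1 / 27) * PTf q μ0 0 := by
  intro N
  induction N with
  | zero => simp
  | succ N ih =>
    calc WTf q μ0 (N + 1) + (1 / 27) * ∑ t ∈ Finset.range (N + 2), PTf q μ0 t
        = (WTf q μ0 (N + 1) + (1 / 27) * PTf q μ0 (N + 1))
          + (1 / 27) * ∑ t ∈ Finset.range (N + 1), PTf q μ0 t := by
          rw [Finset.sum_range_succ, mul_add]; ring
      _ ≤ WTf q μ0 N + (1 / 27) * ∑ t ∈ Finset.range (N + 1), PTf q μ0 t :=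
          add_le_add_left (WTf_step hq μ0 N) _
      _ ≤ _ := ih

lemma runtime_le {q : ℕ} (hq : 2 ≤ q) (μ0 : PMF State) :
    expectedRuntime (4 * q) (stepMultiBit (4 * q)) μ0 ≤ ((972 * q : ℕ) : ℝ≥0∞) := by
  have hpart : ∀ N : ℕ, ∑ t ∈ Finset.range (N + 1), PTf q μ0 t ≤ ((972 * q : ℕ) : ℝ≥0∞) := by
    intro N
    have h1 := main_induction hq μ0 N
    have h2 : (1 / 27) * ∑ t ∈ Finset.range (N + 1), PTf q μ0 t
        ≤ WTf q μ0 0 + (1 / 27) * PTf q μ0 0 := le_trans (le_add_left le_rfl) h1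
    have h3 : WTf q μ0 0 + (1 / 27) * PTf q μ0 0 ≤ 2 * ((18 * q : ℕ) : ℝ≥0∞) := by
      have hW := WTf_zero_le (q := q) μ0
      have hP : (1 / 27 : ℝ≥0∞) * PTf q μ0 0 ≤ WTf q μ0 0 := by
        calc (1 / 27 : ℝ≥0∞) * PTf q μ0 0 ≤ 1 * PTf q μ0 0 := by
              refine mul_le_mul_left ?_ _
              exact ENNReal.div_le_of_le_mul (by simp)
          _ = PTf q μ0 0 := one_mul _
          _ ≤ WTf q μ0 0 := PTf_le_WTf hq μ0 0
      calc WTf q μ0 0 + (1 / 27) * PTf q μ0 0 ≤ WTf q μ0 0 + WTf q μ0 0 :=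
            add_le_add_right hP _
        _ = 2 * WTf q μ0 0 := (two_mul _).symm
        _ ≤ 2 * ((18 * q : ℕ) : ℝ≥0∞) := mul_le_mul_right hW _
    have h4 : ∑ t ∈ Finset.range (N + 1), PTf q μ0 t
        = 27 * ((1 / 27) * ∑ t ∈ Finset.range (N + 1), PTf q μ0 t) := by
      rw [← mul_assoc, one_div, ENNReal.mul_inv_cancel (by norm_num) (by norm_num), one_mul]
    calc ∑ t ∈ Finset.range (N + 1), PTf q μ0 t
        = 27 * ((1 / 27) * ∑ t ∈ Finset.range (N + 1), PTf q μ0 t) := h4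
      _ ≤ 27 * (2 * ((18 * q : ℕ) : ℝ≥0∞)) := mul_le_mul_right (h2.trans h3) _
      _ = ((972 * q : ℕ) : ℝ≥0∞) := by push_cast; ring
  rw [expectedRuntime]
  rw [ENNReal.tsum_eq_iSup_sum]
  apply iSup_le
  intro s
  by_cases hs : s.Nonempty
  · set N := s.sup id with hN
    have hsub : s ⊆ Finset.range (N + 1) := by
      intro t ht
      simp only [Finset.mem_range]
      have := Finset.le_sup (f := id) ht
      simp only [id] at this
      omega
    calc ∑ t ∈ s, ∑' x : State, alive (4 * q) (stepMultiBit (4 * q)) μ0 t x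
        = ∑ t ∈ s, PTf q μ0 t := rfl
      _ ≤ ∑ t ∈ Finset.range (N + 1), PTf q μ0 t := Finset.sum_le_sum_of_subset hsub
      _ ≤ _ := hpart N
  · rw [Finset.not_nonempty_iff_eq_empty] at hs
    simp [hs]

end Auxiliary

/-- there exists a constant `C > 0` such that for every integer
`n ≥ 8` divisible by `4`, the (1+1)-ENAS algorithm with multi-bit mutation and
initial bound `s = n/4` has expected runtime at most `C·n` on the UNIFORM
problem. -/
theorem multibit_upper_bound :
    ∃ C : ℝ, 0 < C ∧ ∀ n : ℕ, 8 ≤ n → 4 ∣ n →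
      expectedRuntime n (stepMultiBit n) (initDist (n / 4)) ≤
        ENNReal.ofReal (C * n) := by
  refine ⟨243, by norm_num, fun n hn h4 => ?_⟩
  obtain ⟨q, rfl⟩ := h4
  have hq : 2 ≤ q := by omega
  have hdiv : 4 * q / 4 = q := by omega
  rw [hdiv]
  refine (runtime_le hq (initDist q)).trans ?_
  have h : (243 : ℝ) * ((4 * q : ℕ) : ℝ) = ((972 * q : ℕ) : ℝ) := by push_cast; ring
  rw [h, ENNReal.ofReal_natCast]

end ENAS
end

section
/- There exist constants c > 0 and n₀ such that for every integer n ≥ n₀ divisible by 4, the (1+1)-ENAS algorithm with multi-bit mutation and initial bound s = n/4 has expected runtime E[T] ≥ c·n on the UNIFORM problem (the paper's proof gives E[T] ≥ n/5). -/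
/-!
Runtime analysis of the (1+1)-ENAS algorithm on the UNIFORM problem.

A neural architecture is a triple `x = (n_A, n_B, n_C) ∈ ℕ³`.  With `a = n/2`,
`b = c = n/4`, `A = (1/2)·sin(2π/n)`, `B = π/n − A`, the fitness is
`f(x) = (1/π)·((n/2 + i(x))·A + (n/4 + j(x))·B)` where
`i(x) = min(n_B, b) + min(n_C, c)` and
`j(x) = min(n_A, a) + min(n_B, b) − max(0, min(n_B − b, c − n_C))` (in ℤ).

One-bit mutation chooses uniformly among nine actions (three increments with
probability 1/9 each, three guarded decrements with probability 1/9 each and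
six guarded modifications with probability 1/18 each); we realize this as the
push-forward of the uniform distribution on `Fin 18`.

The (1+1)-ENAS Markov chain starts from a state whose coordinates are
independent uniform on `{0,…,s}` and repeatedly applies mutation followed by
elitist selection.  The expected runtime `E[T]`, where `T` is the first `t`
with `f(x_t) = 1`, is expressed as `∑_{t≥0} P(T > t)`, where
`P(T > t) = ∑_x alive t x` and `alive t x` is the probability that the chain
is in state `x` at time `t` without having reached fitness `1` at any time
`u ≤ t`.
-/

namespace ENAS

open scoped ENNReal

/-! ### Auxiliary machinery for the lower bound -/

private lemma tsum_bind_mul {α β : Type*} (p : PMF α) (q : α → PMF β) (f : β → ℝ≥0∞) :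
    ∑' y, (p.bind q) y * f y = ∑' x, p x * ∑' y, q x y * f y := by
  simp only [PMF.bind_apply]
  have h : ∀ y, (∑' a, p a * q a y) * f y = ∑' a, p a * (q a y * f y) := by
    intro y; rw [← ENNReal.tsum_mul_right]; congr 1; ext a; ring
  simp only [h]
  rw [ENNReal.tsum_comm]
  congr 1; ext x
  rw [ENNReal.tsum_mul_left]

private lemma tsum_map_mul {α β : Type*} (p : PMF α) (g : α → β) (f : β → ℝ≥0∞) :
    ∑' y, (p.map g) y * f y = ∑' x, p x * f (g x) := by
  rw [PMF.map, tsum_bind_mul]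
  congr 1; ext x
  congr 1
  rw [tsum_eq_single (g x)]
  · simp [PMF.pure_apply]
  · intro b hb; simp [PMF.pure_apply, hb]

open ProbabilityTheory in
private lemma poisson_real_hasSum :
    HasSum (fun k : ℕ => poissonPMFReal 1 k * k) 1 := by
  have h0 : HasSum (fun n : ℕ => (1:ℝ) ^ n / n.factorial) (Real.exp 1) := by
    rw [Real.exp_eq_exp_ℝ]; exact NormedSpace.expSeries_div_hasSum_exp (1:ℝ)
  have h1 : HasSum (fun n : ℕ => (1:ℝ) / n.factorial) (Real.exp 1) := by
    simpa using h0
  have h2 : HasSum (fun n : ℕ => ((n:ℝ)) / n.factorial) (Real.exp 1) := by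
    have key : HasSum (fun n : ℕ => (((n:ℕ) + 1 : ℕ) : ℝ) / ((n:ℕ) + 1).factorial)
        (Real.exp 1) := by
      have heq : (fun n : ℕ => ((n + 1 : ℕ) : ℝ) / (n + 1).factorial)
          = fun n : ℕ => (1:ℝ) / n.factorial := by
        ext n
        rw [Nat.factorial_succ]
        push_cast
        field_simp
      rw [heq]
      simpa using h1
    have := (hasSum_nat_add_iff (f := fun n : ℕ => (n:ℝ) / n.factorial)
        (g := Real.exp 1) 1).mp key
    simpa using this
  have h3 := h2.mul_left (Real.exp (-1))
  have he : Real.exp (-1) * Real.exp 1 = 1 := by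
    rw [← Real.exp_add]; norm_num
  rw [he] at h3
  have heq : (fun k : ℕ => poissonPMFReal 1 k * k)
      = fun k : ℕ => Real.exp (-1) * ((k:ℝ) / k.factorial) := by
    ext k; simp [poissonPMFReal]; ring
  rw [heq]
  exact h3

open ProbabilityTheory in
private lemma poisson_mean : ∑' k : ℕ, (poissonPMF 1 k) * (k : ℝ≥0∞) = 1 := by
  have h : ∀ k : ℕ, (poissonPMF 1 k) * (k : ℝ≥0∞)
      = ENNReal.ofReal (poissonPMFReal 1 k * k) := by
    intro k
    rw [ENNReal.ofReal_mul poissonPMFReal_nonneg, ENNReal.ofReal_natCast]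
    rfl
  simp only [h]
  have h1 := (poisson_real_hasSum.toNNReal
    (fun k => mul_nonneg poissonPMFReal_nonneg (Nat.cast_nonneg k)))
  have h2 : HasSum (fun k : ℕ => ENNReal.ofReal (poissonPMFReal 1 k * k)) 1 := by
    rw [← ENNReal.coe_one]
    exact ENNReal.hasSum_coe.mpr (by simpa using h1)
  exact h2.tsum_eq

open ProbabilityTheory in
private lemma poisson_plus_one :
    ∑' k : ℕ, (poissonPMF 1 k) * ((k : ℝ≥0∞) + 1) = 2 := by
  have h : ∀ k : ℕ, (poissonPMF 1 k) * ((k : ℝ≥0∞) + 1)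
      = (poissonPMF 1 k) * (k : ℝ≥0∞) + poissonPMF 1 k := by intro k; ring
  simp only [h]
  rw [ENNReal.tsum_add, poisson_mean, (poissonPMF 1).tsum_coe]
  norm_num

private lemma algebra_key (M i j s B P : ℝ) (hspos : 0 < s) (hB : 0 < B)
    (hiub : i ≤ 2 * M) (hjub : j ≤ 3 * M)
    (heq : (2 * M + i) * (s / 2) + (M + j) * B = P)
    (hpieq : 4 * M * (s / 2) + 4 * M * B = P) : j = 3 * M := by
  have e0 : (2 * M - i) * (s / 2) + (3 * M - j) * B = 0 := by
    linear_combination hpieq - heq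
  have e1 : (3 * M - j) * B ≤ 0 := by
    nlinarith [mul_nonneg (by linarith : (0:ℝ) ≤ 2 * M - i) (by linarith : (0:ℝ) ≤ s / 2)]
  have hj3 : 3 * M - j ≤ 0 := by
    by_contra hc
    push_neg at hc
    exact absurd (mul_pos hc hB) (not_lt.2 e1)
  linarith

/-- If the fitness is maximal, then the number of A-blocks is at least `n/2`. -/
lemma fitness_one_fst {n : ℕ} (hn : 8 ≤ n) (h4 : 4 ∣ n) {x : State}
    (h : fitness n x = 1) : n / 2 ≤ x.1 := by
  obtain ⟨m, rfl⟩ := h4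
  have hm : 2 ≤ m := by omega
  have hM : (2:ℝ) ≤ (m:ℝ) := by exact_mod_cast hm
  have hpi : (0:ℝ) < Real.pi := Real.pi_pos
  have hspos : 0 < Real.sin (2 * Real.pi / (4 * (m:ℝ))) := by
    apply Real.sin_pos_of_pos_of_lt_pi
    · positivity
    · rw [div_lt_iff₀ (by positivity)]; nlinarith
  have hslt : Real.sin (2 * Real.pi / (4 * (m:ℝ))) < 2 * Real.pi / (4 * (m:ℝ)) :=
    Real.sin_lt (by positivity)
  have hBpos : 0 < Real.pi / (4 * (m:ℝ)) - Real.sin (2 * Real.pi / (4 * (m:ℝ))) / 2 := by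
    have h2 : Real.pi / (4 * (m:ℝ)) = (2 * Real.pi / (4 * (m:ℝ))) / 2 := by ring
    rw [h2]; linarith
  have hiub : (iVal (4 * m) x : ℝ) ≤ 2 * (m:ℝ) := by
    have h1 : iVal (4 * m) x ≤ 2 * m := by
      unfold iVal
      have h4' : (4 * m) / 4 = m := by omega
      rw [h4']; omega
    exact_mod_cast h1
  have hjubZ : jVal (4 * m) x ≤ 3 * m := by
    unfold jVal
    have h2 : ((4 * m : ℕ) : ℤ) / 2 = 2 * m := by push_cast; omega
    have h4' : ((4 * m : ℕ) : ℤ) / 4 = m := by push_cast; omega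
    rw [h2, h4']; omega
  have hjub : ((jVal (4 * m) x : ℤ) : ℝ) ≤ 3 * (m:ℝ) := by exact_mod_cast hjubZ
  have heq : (2 * (m:ℝ) + (iVal (4*m) x : ℝ)) * (Real.sin (2 * Real.pi / (4 * (m:ℝ))) / 2)
      + ((m:ℝ) + ((jVal (4*m) x : ℤ) : ℝ)) *
        (Real.pi / (4 * (m:ℝ)) - Real.sin (2 * Real.pi / (4 * (m:ℝ))) / 2) = Real.pi := by
    unfold fitness at h
    rw [div_mul_eq_mul_div, div_eq_iff (ne_of_gt hpi), one_mul, one_mul] at h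
    push_cast at h
    linear_combination h
  have hpieq : 4 * (m:ℝ) * (Real.sin (2 * Real.pi / (4 * (m:ℝ))) / 2)
      + 4 * (m:ℝ) * (Real.pi / (4 * (m:ℝ)) - Real.sin (2 * Real.pi / (4 * (m:ℝ))) / 2)
      = Real.pi := by
    have hm0 : (m:ℝ) ≠ 0 := by positivity
    field_simp
    ring
  have hjeq := algebra_key (m:ℝ) _ _ _ _ _ hspos hBpos hiub hjub heq hpieq
  have hjZ : jVal (4 * m) x = 3 * m := by exact_mod_cast hjeq
  have hgoal : 2 * m ≤ x.1 := by
    unfold jVal at hjZ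
    have h2 : ((4 * m : ℕ) : ℤ) / 2 = 2 * m := by push_cast; omega
    have h4' : ((4 * m : ℕ) : ℤ) / 4 = m := by push_cast; omega
    rw [h2, h4'] at hjZ
    omega
  omega

/-- The potential function: `min (n/4) (n/2 - n_A)`. -/
noncomputable def phi (n : ℕ) (x : State) : ℝ≥0∞ :=
  ((min (n / 4) (n / 2 - x.1) : ℕ) : ℝ≥0∞)

lemma phi_le (n : ℕ) (x : State) : phi n x ≤ ((n / 4 : ℕ) : ℝ≥0∞) := by
  unfold phi
  exact_mod_cast Nat.cast_le.mpr (min_le_left _ _)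

lemma applyAction_fst_le (k : Fin 18) (x : State) :
    (applyAction k x).1 ≤ x.1 + 1 := by
  obtain ⟨na, nb, nc⟩ := x
  fin_cases k <;> simp only [applyAction] <;> (try split_ifs) <;> omega

lemma phi_le_of_fst (n : ℕ) {x z : State} (h : z.1 ≤ x.1 + 1) :
    phi n x ≤ phi n z + 1 := by
  unfold phi
  have h1 : min (n / 4) (n / 2 - x.1) ≤ min (n / 4) (n / 2 - z.1) + 1 := by omega
  calc ((min (n / 4) (n / 2 - x.1) : ℕ) : ℝ≥0∞)
      ≤ ((min (n / 4) (n / 2 - z.1) + 1 : ℕ) : ℝ≥0∞) := by exact_mod_cast h1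
    _ = ((min (n / 4) (n / 2 - z.1) : ℕ) : ℝ≥0∞) + 1 := by push_cast; ring

lemma phi_mutate {x z : State} (n : ℕ) (hz : z ∈ (mutate x).support) :
    phi n x ≤ phi n z + 1 := by
  rw [mutate, PMF.mem_support_map_iff] at hz
  obtain ⟨k, -, rfl⟩ := hz
  exact phi_le_of_fst n (applyAction_fst_le k x)

lemma phi_mutateIter {n : ℕ} :
    ∀ (k : ℕ) (x z : State), z ∈ (mutateIter k x).support →
      phi n x ≤ phi n z + k := by
  intro k
  induction k with
  | zero =>
    intro x z hz
    rw [mutateIter] at hz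
    simp only [PMF.support_pure, Set.mem_singleton_iff] at hz
    subst hz
    simp
  | succ k ih =>
    intro x z hz
    rw [mutateIter, PMF.mem_support_bind_iff] at hz
    obtain ⟨w, hw, hzw⟩ := hz
    calc phi n x ≤ phi n w + 1 := phi_mutate n hw
      _ ≤ (phi n z + k) + 1 := add_le_add_left (ih w z hzw) 1
      _ = phi n z + (k + 1 : ℕ) := by push_cast; ring

lemma phi_select (n : ℕ) {y z : State} (k : ℝ≥0∞)
    (h : phi n y ≤ phi n z + k) :
    phi n y ≤ phi n (select n y z) + k := by
  unfold select
  split_ifs with hf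
  · exact h
  · exact le_self_add

private lemma tsum_mul_add {α : Type*} (q : PMF α) (f : α → ℝ≥0∞) (c : ℝ≥0∞) :
    ∑' z, q z * (f z + c) = (∑' z, q z * f z) + c := by
  have h : ∀ z, q z * (f z + c) = q z * f z + q z * c := fun z => mul_add _ _ _
  simp only [h]
  rw [ENNReal.tsum_add, ENNReal.tsum_mul_right, q.tsum_coe, one_mul]

/-- Expected one-step decrease of the potential is at most `2`. -/
lemma phi_step (n : ℕ) (y : State) :
    phi n y ≤ (∑' x, stepMultiBit n y x * phi n x) + 2 := by
  have hmap : ∑' x, stepMultiBit n y x * phi n x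
      = ∑' z, mutateMulti y z * phi n (select n y z) := by
    rw [stepMultiBit, tsum_map_mul]
  have hbind : ∑' z, mutateMulti y z * phi n (select n y z)
      = ∑' k : ℕ, (ProbabilityTheory.poissonPMF 1) k *
          ∑' z, (mutateIter (k + 1) y) z * phi n (select n y z) := by
    rw [mutateMulti, tsum_bind_mul]
  have hCk : ∀ k : ℕ, phi n y
      ≤ (∑' z, (mutateIter (k + 1) y) z * phi n (select n y z)) + ((k : ℝ≥0∞) + 1) := by
    intro k
    have hpt : ∀ z, (mutateIter (k + 1) y) z * phi n y
        ≤ (mutateIter (k + 1) y) z * (phi n (select n y z) + ((k : ℝ≥0∞) + 1)) := by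
      intro z
      rcases eq_or_ne ((mutateIter (k + 1) y) z) 0 with h0 | h0
      · simp [h0]
      · apply mul_le_mul_right
        have hz : z ∈ (mutateIter (k + 1) y).support := h0
        have := phi_mutateIter (n := n) (k + 1) y z hz
        have h3 : phi n y ≤ phi n z + ((k : ℝ≥0∞) + 1) := by
          calc phi n y ≤ phi n z + ((k + 1 : ℕ) : ℝ≥0∞) := this
            _ = phi n z + ((k : ℝ≥0∞) + 1) := by push_cast; ring
        exact phi_select n _ h3
    calc phi n y = ∑' z, (mutateIter (k + 1) y) z * phi n y := by
          rw [ENNReal.tsum_mul_right, (mutateIter (k + 1) y).tsum_coe, one_mul]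
      _ ≤ ∑' z, (mutateIter (k + 1) y) z * (phi n (select n y z) + ((k : ℝ≥0∞) + 1)) :=
          ENNReal.tsum_le_tsum hpt
      _ = (∑' z, (mutateIter (k + 1) y) z * phi n (select n y z)) + ((k : ℝ≥0∞) + 1) :=
          tsum_mul_add _ _ _
  rw [hmap, hbind]
  calc phi n y
      = ∑' k : ℕ, (ProbabilityTheory.poissonPMF 1) k * phi n y := by
        rw [ENNReal.tsum_mul_right, (ProbabilityTheory.poissonPMF 1).tsum_coe, one_mul]
    _ ≤ ∑' k : ℕ, (ProbabilityTheory.poissonPMF 1) k *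
          ((∑' z, (mutateIter (k + 1) y) z * phi n (select n y z)) + ((k : ℝ≥0∞) + 1)) :=
        ENNReal.tsum_le_tsum fun k => mul_le_mul_right (hCk k) _
    _ = (∑' k : ℕ, (ProbabilityTheory.poissonPMF 1) k *
          ∑' z, (mutateIter (k + 1) y) z * phi n (select n y z)) + 2 := by
        have h : ∀ k : ℕ, (ProbabilityTheory.poissonPMF 1) k *
            ((∑' z, (mutateIter (k + 1) y) z * phi n (select n y z)) + ((k : ℝ≥0∞) + 1))
            = (ProbabilityTheory.poissonPMF 1) k *
                (∑' z, (mutateIter (k + 1) y) z * phi n (select n y z))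
              + (ProbabilityTheory.poissonPMF 1) k * ((k : ℝ≥0∞) + 1) :=
          fun k => mul_add _ _ _
        simp only [h]
        rw [ENNReal.tsum_add]
        congr 1
        exact poisson_plus_one


section Mass

variable (n : ℕ) (step : State → PMF State) (μ0 : PMF State)

private lemma tsum_swap_mul (a : State → ℝ≥0∞) (s : State → State → ℝ≥0∞) :
    ∑' x, ∑' y, a y * s y x = ∑' y, a y * ∑' x, s y x := by
  rw [ENNReal.tsum_comm]
  congr 1; ext y
  rw [ENNReal.tsum_mul_left]

lemma mass_le_one : ∀ t, ∑' x, alive n step μ0 t x ≤ 1 := by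
  intro t
  induction t with
  | zero =>
    calc ∑' x, alive n step μ0 0 x ≤ ∑' x, μ0 x := by
          apply ENNReal.tsum_le_tsum
          intro x
          show (if fitness n x = 1 then 0 else μ0 x) ≤ μ0 x
          split_ifs <;> simp
      _ = 1 := μ0.tsum_coe
  | succ t ih =>
    calc ∑' x, alive n step μ0 (t + 1) x
        ≤ ∑' x, ∑' y, alive n step μ0 t y * step y x := by
          apply ENNReal.tsum_le_tsum
          intro x
          show (if fitness n x = 1 then 0 else ∑' y, alive n step μ0 t y * step y x) ≤ _
          split_ifs <;> simp
      _ = ∑' y, alive n step μ0 t y * ∑' x, step y x :=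
          tsum_swap_mul _ _
      _ = ∑' y, alive n step μ0 t y := by
          congr 1; ext y; rw [(step y).tsum_coe, mul_one]
      _ ≤ 1 := ih

end Mass

section PhiMass

variable {n : ℕ}

lemma phi_eq_zero_of_fitness (hn : 8 ≤ n) (h4 : 4 ∣ n) {x : State}
    (h : fitness n x = 1) : phi n x = 0 := by
  have hx := fitness_one_fst hn h4 h
  unfold phi
  have : min (n / 4) (n / 2 - x.1) = 0 := by omega
  rw [this]
  simp

lemma initDist_support {s : ℕ} {x : State} (h : initDist s x ≠ 0) : x.1 ≤ s := by
  have hx : x ∈ (initDist s).support := h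
  rw [initDist, PMF.mem_support_map_iff] at hx
  obtain ⟨q, -, rfl⟩ := hx
  exact Nat.lt_succ_iff.mp q.1.isLt

lemma Phi_zero (hn : 8 ≤ n) (h4 : 4 ∣ n) :
    ∑' x, alive n (stepMultiBit n) (initDist (n / 4)) 0 x * phi n x
      = ((n / 4 : ℕ) : ℝ≥0∞) := by
  have hpt : ∀ x : State, alive n (stepMultiBit n) (initDist (n / 4)) 0 x * phi n x
      = initDist (n / 4) x * ((n / 4 : ℕ) : ℝ≥0∞) := by
    intro x
    show (if fitness n x = 1 then 0 else initDist (n / 4) x) * phi n x = _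
    rcases eq_or_ne (initDist (n / 4) x) 0 with h0 | h0
    · rw [h0]; split_ifs <;> simp
    · have hx1 : x.1 ≤ n / 4 := initDist_support h0
      have hfit : fitness n x ≠ 1 := by
        intro hf
        have := fitness_one_fst hn h4 hf
        omega
      rw [if_neg hfit]
      congr 1
      unfold phi
      congr 1
      omega
  calc ∑' x, alive n (stepMultiBit n) (initDist (n / 4)) 0 x * phi n x
      = ∑' x, initDist (n / 4) x * ((n / 4 : ℕ) : ℝ≥0∞) := by
        congr 1; ext x; exact hpt x
    _ = ((n / 4 : ℕ) : ℝ≥0∞) := by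
        rw [ENNReal.tsum_mul_right, (initDist (n / 4)).tsum_coe, one_mul]

lemma Phi_succ_ge (hn : 8 ≤ n) (h4 : 4 ∣ n) (t : ℕ) :
    ∑' x, alive n (stepMultiBit n) (initDist (n / 4)) t x * phi n x
      ≤ (∑' x, alive n (stepMultiBit n) (initDist (n / 4)) (t + 1) x * phi n x) + 2 := by
  set a : State → ℝ≥0∞ := alive n (stepMultiBit n) (initDist (n / 4)) t with ha
  have hstep : ∀ x : State,
      alive n (stepMultiBit n) (initDist (n / 4)) (t + 1) x * phi n x
        = (∑' y, a y * stepMultiBit n y x) * phi n x := by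
    intro x
    show (if fitness n x = 1 then 0 else ∑' y, a y * stepMultiBit n y x) * phi n x = _
    split_ifs with hf
    · rw [phi_eq_zero_of_fitness hn h4 hf, mul_zero, mul_zero]
    · rfl
  have hPhi1 : ∑' x, alive n (stepMultiBit n) (initDist (n / 4)) (t + 1) x * phi n x
      = ∑' y, a y * ∑' x, stepMultiBit n y x * phi n x := by
    simp only [hstep]
    have h1 : ∀ x : State, (∑' y, a y * stepMultiBit n y x) * phi n x
        = ∑' y, a y * (stepMultiBit n y x * phi n x) := by
      intro x
      rw [← ENNReal.tsum_mul_right]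
      congr 1; ext y; ring
    simp only [h1]
    rw [ENNReal.tsum_comm]
    congr 1; ext y
    rw [ENNReal.tsum_mul_left]
  rw [hPhi1]
  calc ∑' y, a y * phi n y
      ≤ ∑' y, a y * ((∑' x, stepMultiBit n y x * phi n x) + 2) :=
        ENNReal.tsum_le_tsum fun y => mul_le_mul_right (phi_step n y) _
    _ = (∑' y, a y * ∑' x, stepMultiBit n y x * phi n x) + (∑' y, a y) * 2 := by
        have h2 : ∀ y : State, a y * ((∑' x, stepMultiBit n y x * phi n x) + 2)
            = a y * (∑' x, stepMultiBit n y x * phi n x) + a y * 2 :=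
          fun y => mul_add _ _ _
        simp only [h2]
        rw [ENNReal.tsum_add, ENNReal.tsum_mul_right]
    _ ≤ (∑' y, a y * ∑' x, stepMultiBit n y x * phi n x) + 1 * 2 := by
        gcongr
        exact mass_le_one n (stepMultiBit n) (initDist (n / 4)) t
    _ = (∑' y, a y * ∑' x, stepMultiBit n y x * phi n x) + 2 := by rw [one_mul]

lemma Phi_zero_le (hn : 8 ≤ n) (h4 : 4 ∣ n) (t : ℕ) :
    ((n / 4 : ℕ) : ℝ≥0∞)
      ≤ (∑' x, alive n (stepMultiBit n) (initDist (n / 4)) t x * phi n x)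
        + 2 * (t : ℝ≥0∞) := by
  induction t with
  | zero => rw [Phi_zero hn h4]; simp
  | succ t ih =>
    calc ((n / 4 : ℕ) : ℝ≥0∞)
        ≤ (∑' x, alive n (stepMultiBit n) (initDist (n / 4)) t x * phi n x)
          + 2 * (t : ℝ≥0∞) := ih
      _ ≤ ((∑' x, alive n (stepMultiBit n) (initDist (n / 4)) (t + 1) x * phi n x) + 2)
          + 2 * (t : ℝ≥0∞) := by gcongr; exact Phi_succ_ge hn h4 t
      _ = (∑' x, alive n (stepMultiBit n) (initDist (n / 4)) (t + 1) x * phi n x)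
          + 2 * ((t : ℝ≥0∞) + 1) := by ring
      _ = (∑' x, alive n (stepMultiBit n) (initDist (n / 4)) (t + 1) x * phi n x)
          + 2 * (((t + 1 : ℕ)) : ℝ≥0∞) := by push_cast; ring

lemma mass_half (hn : 8 ≤ n) (h4 : 4 ∣ n) {t : ℕ} (ht : 4 * t ≤ n / 4) :
    (2⁻¹ : ℝ≥0∞) ≤ ∑' x, alive n (stepMultiBit n) (initDist (n / 4)) t x := by
  set m : ℕ := n / 4 with hm
  set mass : ℝ≥0∞ := ∑' x, alive n (stepMultiBit n) (initDist (n / 4)) t x with hmass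
  have hm2 : 2 ≤ m := by omega
  have hPhile : ∑' x, alive n (stepMultiBit n) (initDist (n / 4)) t x * phi n x
      ≤ (m : ℝ≥0∞) * mass := by
    rw [hmass, ← ENNReal.tsum_mul_left]
    apply ENNReal.tsum_le_tsum
    intro x
    rw [mul_comm ((m : ℝ≥0∞))]
    exact mul_le_mul_right (phi_le n x) _
  have h1 : (m : ℝ≥0∞) ≤ (m : ℝ≥0∞) * mass + ((2 * t : ℕ) : ℝ≥0∞) := by
    calc (m : ℝ≥0∞) ≤ (∑' x, alive n (stepMultiBit n) (initDist (n / 4)) t x * phi n x)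
          + 2 * (t : ℝ≥0∞) := Phi_zero_le hn h4 t
      _ ≤ (m : ℝ≥0∞) * mass + ((2 * t : ℕ) : ℝ≥0∞) := by
          push_cast
          gcongr
  have h2 : ((m - 2 * t : ℕ) : ℝ≥0∞) ≤ (m : ℝ≥0∞) * mass := by
    have hadd : ((m - 2 * t : ℕ) : ℝ≥0∞) + ((2 * t : ℕ) : ℝ≥0∞)
        ≤ (m : ℝ≥0∞) * mass + ((2 * t : ℕ) : ℝ≥0∞) := by
      calc ((m - 2 * t : ℕ) : ℝ≥0∞) + ((2 * t : ℕ) : ℝ≥0∞)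
          = ((m - 2 * t + 2 * t : ℕ) : ℝ≥0∞) := by push_cast; ring
        _ = (m : ℝ≥0∞) := by congr 1; omega
        _ ≤ _ := h1
    exact (ENNReal.add_le_add_iff_right (ENNReal.natCast_ne_top _)).mp hadd
  have h3 : (m : ℝ≥0∞) * 2⁻¹ ≤ ((m - 2 * t : ℕ) : ℝ≥0∞) := by
    rw [← div_eq_mul_inv]
    rw [ENNReal.div_le_iff_le_mul (Or.inl two_ne_zero) (Or.inl ENNReal.ofNat_ne_top)]
    have : ((m - 2 * t : ℕ) : ℝ≥0∞) * 2 = (((m - 2 * t) * 2 : ℕ) : ℝ≥0∞) := by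
      push_cast; ring
    rw [this]
    have hle : m ≤ (m - 2 * t) * 2 := by omega
    exact_mod_cast Nat.cast_le.mpr hle
  have h4' : (m : ℝ≥0∞) * 2⁻¹ ≤ (m : ℝ≥0∞) * mass := le_trans h3 h2
  have hm0 : (m : ℝ≥0∞) ≠ 0 := by
    simp only [ne_eq, Nat.cast_eq_zero]
    omega
  exact (ENNReal.mul_le_mul_iff_right hm0 (ENNReal.natCast_ne_top _)).mp h4'

end PhiMass

/-- there exist constants `c > 0` and `n₀` such that for every
integer `n ≥ n₀` divisible by `4`, the (1+1)-ENAS algorithm with multi-bit mutation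
and initial bound `s = n/4` has expected runtime at least `c·n` on the UNIFORM
problem (the paper's proof gives `E[T] ≥ n/5`). -/
theorem multibit_lower_bound :
    ∃ c : ℝ, 0 < c ∧ ∃ n₀ : ℕ, ∀ n : ℕ, n₀ ≤ n → 4 ∣ n →
      ENNReal.ofReal (c * n) ≤
        expectedRuntime n (stepMultiBit n) (initDist (n / 4)) := by
  refine ⟨1 / 64, by norm_num, 64, fun n hn h4 => ?_⟩
  have hn8 : 8 ≤ n := by omega
  set q : ℕ := n / 4 / 4 with hq
  have hmain : ∀ t ∈ Finset.range (q + 1), (2⁻¹ : ℝ≥0∞)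
      ≤ ∑' x, alive n (stepMultiBit n) (initDist (n / 4)) t x := by
    intro t ht
    rw [Finset.mem_range] at ht
    exact mass_half hn8 h4 (by omega)
  have hsum : ((q + 1 : ℕ) : ℝ≥0∞) * 2⁻¹
      ≤ expectedRuntime n (stepMultiBit n) (initDist (n / 4)) := by
    calc ((q + 1 : ℕ) : ℝ≥0∞) * 2⁻¹
        = ∑ t ∈ Finset.range (q + 1), (2⁻¹ : ℝ≥0∞) := by
          rw [Finset.sum_const, Finset.card_range, nsmul_eq_mul]
      _ ≤ ∑ t ∈ Finset.range (q + 1),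
            ∑' x, alive n (stepMultiBit n) (initDist (n / 4)) t x :=
          Finset.sum_le_sum hmain
      _ ≤ ∑' t : ℕ, ∑' x, alive n (stepMultiBit n) (initDist (n / 4)) t x :=
          ENNReal.sum_le_tsum _
      _ = expectedRuntime n (stepMultiBit n) (initDist (n / 4)) := rfl
  refine le_trans ?_ hsum
  have hnq : (n : ℝ) / 32 ≤ ((q + 1 : ℕ) : ℝ) := by
    have : n ≤ 32 * (q + 1) := by omega
    have h' : (n : ℝ) ≤ 32 * ((q + 1 : ℕ) : ℝ) := by exact_mod_cast this
    linarith
  calc ENNReal.ofReal (1 / 64 * n)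
      ≤ ENNReal.ofReal (((q + 1 : ℕ) : ℝ) * (1 / 2)) := by
        apply ENNReal.ofReal_le_ofReal
        linarith
    _ = ((q + 1 : ℕ) : ℝ≥0∞) * ENNReal.ofReal (1 / 2) := by
        rw [ENNReal.ofReal_mul (by positivity), ENNReal.ofReal_natCast]
    _ = ((q + 1 : ℕ) : ℝ≥0∞) * 2⁻¹ := by
        congr 1
        rw [one_div, ENNReal.ofReal_inv_of_pos (by norm_num)]
        norm_num

end ENAS
end
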